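/- In the 3-node connected Kripke model with b ≽ a, b ≽ c, where a forces only p and b forces p and q (c forces nothing), every formula θ built from p, q, ⊤ using only ¬, ∨, ∧ satisfies: if both b and c force θ, then a forces θ. -/
import Mathlib


inductive Fm (α : Type) : Type where
  | top  : Fm α
  | atom : α → Fm α
  | neg  : Fm α → Fm α
  | and  : Fm α → Fm α → Fm α
  | or   : Fm α → Fm α → Fm α
  | imp  : Fm α → Fm α → Fm α

structure KripkeModel (α : Type) : Type 1 where
  K : Type
  le : K → K → Prop
  refl : ∀ k, le k k
  trans : ∀ {a b c}, le a b → le b c → le a c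
  antisymm : ∀ {a b}, le a b → le b a → a = b
  val : K → α → Prop
  persist : ∀ {k k' p}, le k k' → val k p → val k' p

def force {α : Type} (M : KripkeModel α) : M.K → Fm α → Prop
  | _, .top => True
  | k, .atom p => M.val k p
  | k, .neg φ => ∀ k', M.le k k' → ¬ force M k' φ
  | k, .and φ ψ => force M k φ ∧ force M k ψ
  | k, .or φ ψ => force M k φ ∨ force M k ψ
  | k, .imp φ ψ => ∀ k', M.le k k' → force M k' φ → force M k' ψ

/-- →-free formulas: built using only ¬, ∨, ∧, ⊤ and atoms. -/
def NoImp {α : Type} : Fm α → Prop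
  | .top => True
  | .atom _ => True
  | .neg φ => NoImp φ
  | .and φ ψ => NoImp φ ∧ NoImp ψ
  | .or φ ψ => NoImp φ ∧ NoImp ψ
  | .imp _ _ => False

/-- The connected 3-node Kripke model with nodes a = 0, b = 1, c = 2; order the
reflexive closure of a ≺ b, c ≺ b; atoms p = 0, q = 1; a ⊩ p, b ⊩ p,q, and c
forces no atom. -/
def M13 : KripkeModel (Fin 2) where
  K := Fin 3
  le := fun x y => x = y ∨ (x = 0 ∧ y = 1) ∨ (x = 2 ∧ y = 1)
  refl := by decide
  trans := by decide
  antisymm := by decide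
  val := fun k p => (k = 0 ∧ p = 0) ∨ k = 1
  persist := by decide

theorem force_mono {α : Type} (M : KripkeModel α) (φ : Fm α) :
    ∀ {k k'}, M.le k k' → force M k φ → force M k' φ := by
  induction φ with
  | top => intro k k' _ _; trivial
  | atom p => intro k k' h hf; exact M.persist h hf
  | neg φ ih => intro k k' h hf k'' h' hφ; exact hf k'' (M.trans h h') hφ
  | and φ ψ ihφ ihψ => intro k k' h hf; exact ⟨ihφ h hf.1, ihψ h hf.2⟩
  | or φ ψ ihφ ihψ =>
      intro k k' h hf
      cases hf with
      | inl hf => exact Or.inl (ihφ h hf)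
      | inr hf => exact Or.inr (ihψ h hf)
  | imp φ ψ ihφ ihψ => intro k k' h hf k'' h' hφ; exact hf k'' (M.trans h h') hφ

/-- In the model M13, every →-free formula θ in atoms p, q forced at both b and
c is forced at a. -/
theorem no_imp_force_down (θ : Fm (Fin 2)) (hθ : NoImp θ)
    (hb : force M13 (1 : Fin 3) θ) (hc : force M13 (2 : Fin 3) θ) :
    force M13 (0 : Fin 3) θ := by
  induction θ with
  | top => trivial
  | atom p =>
      rcases hc with ⟨h, _⟩ | h <;> exact absurd h (by decide)
  | neg φ ih =>
      intro k' hle hφ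
      rcases hle with h | ⟨_, h⟩ | ⟨h, _⟩
      · subst h
        exact hb (1 : Fin 3) (Or.inl rfl) (force_mono M13 φ (Or.inr (Or.inl ⟨rfl, rfl⟩)) hφ)
      · subst h; exact hb (1 : Fin 3) (Or.inl rfl) hφ
      · simp at h
  | and φ ψ ihφ ihψ => exact ⟨ihφ hθ.1 hb.1 hc.1, ihψ hθ.2 hb.2 hc.2⟩
  | or φ ψ ihφ ihψ =>
      rcases hc with hc | hc
      · rcases hb with hb | hb
        · exact Or.inl (ihφ hθ.1 hb hc)
        · -- b forces ψ, c forces φ; but b forces φ by monotonicity from c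
          exact Or.inl (ihφ hθ.1 (force_mono M13 φ (Or.inr (Or.inr ⟨rfl, rfl⟩)) hc) hc)
      · rcases hb with hb | hb
        · exact Or.inr (ihψ hθ.2 (force_mono M13 ψ (Or.inr (Or.inr ⟨rfl, rfl⟩)) hc) hc)
        · exact Or.inr (ihψ hθ.2 hb hc)
  | imp φ ψ _ _ => exact absurd hθ (by simp [NoImp])
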